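/- arXiv:2003.05599 — 2 statements merged into one kernel-verified Lean document; each statement's English description precedes it below -/
import Mathlib

section
/- Suppose X ∼ Beta(αε, α(1−ε)) with αε ≤ 1 and α(1−ε) ≥ 1. Then there is a constant C_α depending only on α such that P(X > t) ≤ C_α (1 − t^{αε}) for all t ∈ [0,1]. -/
open MeasureTheory ENNReal

/-- The Beta(a,b) distribution on `[0,1]`, given by its density
`Γ(a+b)/(Γ(a)Γ(b)) x^(a-1) (1-x)^(b-1)` with respect to Lebesgue measure. -/
noncomputable def betaMeasure (a b : ℝ) : Measure ℝ :=
  volume.withDensity (fun x => ENNReal.ofReal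
    ((Set.Ioo (0 : ℝ) 1).indicator
      (fun y => Real.Gamma (a + b) / (Real.Gamma a * Real.Gamma b)
        * y ^ (a - 1) * (1 - y) ^ (b - 1)) x))

open MeasureTheory

lemma real_beta (a b : ℝ) (ha : 0 < a) (hb : 0 < b) :
    Real.Gamma a * Real.Gamma b
      = Real.Gamma (a + b) * ∫ x in (0:ℝ)..1, x ^ (a - 1) * (1 - x) ^ (b - 1) := by
  have h := Complex.Gamma_mul_Gamma_eq_betaIntegral (s := (a : ℂ)) (t := (b : ℂ))
    (by simpa using ha) (by simpa using hb)
  rw [Complex.betaIntegral] at h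
  have hint : (∫ x : ℝ in (0:ℝ)..1, (x : ℂ) ^ ((a : ℂ) - 1) * (1 - (x : ℂ)) ^ ((b : ℂ) - 1))
      = ((∫ x in (0:ℝ)..1, x ^ (a - 1) * (1 - x) ^ (b - 1) : ℝ) : ℂ) := by
    rw [← intervalIntegral.integral_ofReal]
    refine intervalIntegral.integral_congr fun x hx => ?_
    rw [Set.uIcc_of_le (by norm_num : (0:ℝ) ≤ 1)] at hx
    rw [Complex.ofReal_mul, Complex.ofReal_cpow hx.1, Complex.ofReal_cpow (by linarith [hx.2] : (0:ℝ) ≤ 1 - x)]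
    push_cast
    ring
  rw [hint] at h
  have := Complex.Gamma_ofReal
  rw [Complex.Gamma_ofReal, Complex.Gamma_ofReal, ← Complex.ofReal_add, Complex.Gamma_ofReal] at h
  exact_mod_cast h

lemma beta_integrand_intble {a b : ℝ} (ha : 0 < a) (hb : 1 ≤ b) :
    IntervalIntegrable (fun x : ℝ => x ^ (a - 1) * (1 - x) ^ (b - 1)) volume 0 1 := by
  rw [intervalIntegrable_iff_integrableOn_Ioc_of_le (by norm_num)]
  have hg : IntegrableOn (fun x : ℝ => x ^ (a - 1)) (Set.Ioc 0 1) volume := by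
    have := intervalIntegral.intervalIntegrable_rpow' (r := a - 1) (by linarith) (a := 0) (b := 1)
    rwa [intervalIntegrable_iff_integrableOn_Ioc_of_le (by norm_num)] at this
  refine hg.mono' ?_ ?_
  · exact ((measurable_id.pow_const _).mul
      ((measurable_const.sub measurable_id).pow_const _)).aestronglyMeasurable
  · rw [ae_restrict_iff' measurableSet_Ioc]
    filter_upwards with x hx
    have hx0 : 0 < x := hx.1
    have h1 : (0:ℝ) ≤ 1 - x := by linarith [hx.2]
    rw [Real.norm_eq_abs, abs_of_nonneg (by positivity)]
    calc x ^ (a - 1) * (1 - x) ^ (b - 1) ≤ x ^ (a - 1) * 1 := by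
          gcongr
          exact Real.rpow_le_one h1 (by linarith [hx0]) (by linarith)
      _ = x ^ (a - 1) := mul_one _

lemma beta_int_lb {a b : ℝ} (ha : 0 < a) (hb : 1 ≤ b) :
    ((1:ℝ)/2) ^ (a + b - 1) / a ≤ ∫ x in (0:ℝ)..1, x ^ (a - 1) * (1 - x) ^ (b - 1) := by
  have hI := beta_integrand_intble ha hb
  have hsub1 : Set.uIcc (0:ℝ) (1/2) ⊆ Set.uIcc (0:ℝ) 1 := by
    rw [Set.uIcc_of_le (by norm_num : (0:ℝ) ≤ 1/2), Set.uIcc_of_le (by norm_num : (0:ℝ) ≤ 1)]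
    exact Set.Icc_subset_Icc le_rfl (by norm_num)
  have hsub2 : Set.uIcc (1/2:ℝ) 1 ⊆ Set.uIcc (0:ℝ) 1 := by
    rw [Set.uIcc_of_le (by norm_num : (1/2:ℝ) ≤ 1), Set.uIcc_of_le (by norm_num : (0:ℝ) ≤ 1)]
    exact Set.Icc_subset_Icc (by norm_num) le_rfl
  have hI1 : IntervalIntegrable (fun x : ℝ => x ^ (a - 1) * (1 - x) ^ (b - 1)) volume 0 (1/2) :=
    hI.mono_set hsub1
  have hI2 : IntervalIntegrable (fun x : ℝ => x ^ (a - 1) * (1 - x) ^ (b - 1)) volume (1/2) 1 :=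
    hI.mono_set hsub2
  have hsplit : (∫ x in (0:ℝ)..1, x ^ (a - 1) * (1 - x) ^ (b - 1))
      = (∫ x in (0:ℝ)..(1/2), x ^ (a - 1) * (1 - x) ^ (b - 1))
        + ∫ x in (1/2:ℝ)..1, x ^ (a - 1) * (1 - x) ^ (b - 1) :=
    (intervalIntegral.integral_add_adjacent_intervals hI1 hI2).symm
  have h2 : (0:ℝ) ≤ ∫ x in (1/2:ℝ)..1, x ^ (a - 1) * (1 - x) ^ (b - 1) := by
    apply intervalIntegral.integral_nonneg (by norm_num)
    intro x hx
    have h1 : (0:ℝ) ≤ 1 - x := by linarith [hx.2]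
    have h0 : (0:ℝ) ≤ x := le_trans (by norm_num) hx.1
    exact mul_nonneg (Real.rpow_nonneg h0 _) (Real.rpow_nonneg h1 _)
  have hg1 : IntervalIntegrable (fun x : ℝ => (1/2:ℝ) ^ (b-1) * x ^ (a - 1)) volume 0 (1/2) := by
    apply IntervalIntegrable.const_mul
    exact (intervalIntegral.intervalIntegrable_rpow' (by linarith)).mono_set hsub1
  have h1 : (∫ x in (0:ℝ)..(1/2), (1/2:ℝ) ^ (b-1) * x ^ (a - 1))
      ≤ ∫ x in (0:ℝ)..(1/2), x ^ (a - 1) * (1 - x) ^ (b - 1) := by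
    apply intervalIntegral.integral_mono_on (by norm_num) hg1 hI1
    intro x hx
    have hx2 : x ≤ 1/2 := hx.2
    have key : (1/2:ℝ) ^ (b-1) ≤ (1-x) ^ (b-1) :=
      Real.rpow_le_rpow (by norm_num) (by linarith) (by linarith)
    rw [mul_comm]
    exact mul_le_mul_of_nonneg_left key (Real.rpow_nonneg hx.1 _)
  have hval : (∫ x in (0:ℝ)..(1/2), (1/2:ℝ) ^ (b-1) * x ^ (a - 1))
      = (1/2:ℝ) ^ (a + b - 1) / a := by
    rw [intervalIntegral.integral_const_mul, integral_rpow (Or.inl (by linarith))]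
    have hae : a - 1 + 1 = a := by ring
    rw [hae, Real.zero_rpow ha.ne', sub_zero, ← mul_div_assoc,
      ← Real.rpow_add (by norm_num : (0:ℝ) < 1/2)]
    ring_nf
  linarith [h1, h2, hval, hsplit]

/-- If `X ∼ Beta(αε, α(1-ε))` with `αε ≤ 1` and `α(1-ε) ≥ 1`, then there is a
constant `C_α` depending only on `α` such that `P(X > t) ≤ C_α (1 - t^{αε})`
for all `t ∈ [0,1]`. -/
theorem beta_tail_bound (α : ℝ) (hα : 0 < α) :
    ∃ C : ℝ, 0 < C ∧
      ∀ ε : ℝ, 0 < ε → ε < 1 → α * ε ≤ 1 → 1 ≤ α * (1 - ε) →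
        ∀ t : ℝ, t ∈ Set.Icc (0 : ℝ) 1 →
          betaMeasure (α * ε) (α * (1 - ε)) (Set.Ioi t)
            ≤ ENNReal.ofReal (C * (1 - t ^ (α * ε))) := by
  refine ⟨(2:ℝ) ^ (α - 1), Real.rpow_pos_of_pos two_pos _, ?_⟩
  intro ε hε0 hε1 haε hbε t ht
  set K : ℝ := (2:ℝ) ^ (α - 1) with hK
  have hKpos : 0 < K := Real.rpow_pos_of_pos two_pos _
  set a : ℝ := α * ε with hadef
  set b : ℝ := α * (1 - ε) with hbdef
  have ha : 0 < a := mul_pos hα hε0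
  have hb1 : (1:ℝ) ≤ b := hbε
  have hb : 0 < b := lt_of_lt_of_le one_pos hb1
  have hab : a + b = α := by rw [hadef, hbdef]; ring
  set c : ℝ := Real.Gamma (a + b) / (Real.Gamma a * Real.Gamma b) with hc
  have hGa := Real.Gamma_pos_of_pos ha
  have hGb := Real.Gamma_pos_of_pos hb
  have hGab := Real.Gamma_pos_of_pos (hab ▸ hα)
  have hcpos : 0 < c := div_pos hGab (mul_pos hGa hGb)
  set I : ℝ := ∫ x in (0:ℝ)..1, x ^ (a - 1) * (1 - x) ^ (b - 1) with hI
  have hIlb : K⁻¹ / a ≤ I := by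
    have := beta_int_lb ha hb1
    rwa [hab, show ((1:ℝ)/2) ^ (α - 1) = K⁻¹ by
      rw [hK, ← Real.inv_rpow (by norm_num : (0:ℝ) ≤ 2)]; norm_num] at this
  have hIpos : 0 < I := lt_of_lt_of_le (div_pos (inv_pos.mpr hKpos) ha) hIlb
  have hcI : c = 1 / I := by
    have hid := real_beta a b ha hb
    rw [hc, ← hI] at *
    rw [hid]
    field_simp
  have hca : c / a ≤ K := by
    rw [hcI, div_div, div_le_iff₀ (mul_pos hIpos ha)]
    have h1 : K⁻¹ ≤ I * a := (div_le_iff₀ ha).mp hIlb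
    calc (1:ℝ) = K * K⁻¹ := by field_simp
      _ ≤ K * (I * a) := by gcongr
  -- the measure computation
  have ht0 := ht.1
  have ht1 := ht.2
  have hta : t ^ a ≤ 1 := Real.rpow_le_one ht0 ht1 ha.le
  rw [betaMeasure, withDensity_apply _ measurableSet_Ioi]
  have hrw : (fun x : ℝ => ENNReal.ofReal
      ((Set.Ioo (0:ℝ) 1).indicator
        (fun y => Real.Gamma (a + b) / (Real.Gamma a * Real.Gamma b)
          * y ^ (a - 1) * (1 - y) ^ (b - 1)) x))
      = (Set.Ioo (0:ℝ) 1).indicator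
        (fun y => ENNReal.ofReal (c * y ^ (a - 1) * (1 - y) ^ (b - 1))) := by
    funext x
    by_cases hx : x ∈ Set.Ioo (0:ℝ) 1 <;> simp [Set.indicator, hx, hc]
  rw [hrw, lintegral_indicator measurableSet_Ioo _,
    Measure.restrict_restrict measurableSet_Ioo]
  have hset : Set.Ioo (0:ℝ) 1 ∩ Set.Ioi t = Set.Ioo t 1 := by
    ext x
    simp only [Set.mem_inter_iff, Set.mem_Ioo, Set.mem_Ioi]
    constructor
    · rintro ⟨⟨_, h1⟩, h2⟩; exact ⟨h2, h1⟩
    · rintro ⟨h1, h2⟩; exact ⟨⟨lt_of_le_of_lt ht0 h1, h2⟩, h1⟩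
  rw [hset]
  have hmono : (∫⁻ x in Set.Ioo t 1, ENNReal.ofReal (c * x ^ (a - 1) * (1 - x) ^ (b - 1)))
      ≤ ∫⁻ x in Set.Ioo t 1, ENNReal.ofReal (c * x ^ (a - 1)) := by
    refine setLIntegral_mono ((measurable_const.mul (measurable_id.pow_const _)).ennreal_ofReal) ?_
    intro x hx
    apply ENNReal.ofReal_le_ofReal
    have hx0 : 0 < x := lt_of_le_of_lt ht0 hx.1
    have hx1 : (0:ℝ) ≤ 1 - x := by linarith [hx.2]
    calc c * x ^ (a - 1) * (1 - x) ^ (b - 1) ≤ c * x ^ (a - 1) * 1 :=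
          mul_le_mul_of_nonneg_left
            (Real.rpow_le_one hx1 (by linarith [hx0]) (by linarith)) (by positivity)
      _ = c * x ^ (a - 1) := mul_one _
  refine le_trans hmono ?_
  have hint : IntegrableOn (fun x : ℝ => c * x ^ (a - 1)) (Set.Ioo t 1) volume := by
    have h1 : IntervalIntegrable (fun x : ℝ => x ^ (a - 1)) volume t 1 :=
      intervalIntegral.intervalIntegrable_rpow' (by linarith)
    rw [intervalIntegrable_iff_integrableOn_Ioo_of_le ht1] at h1
    exact h1.const_mul c
  rw [← ofReal_integral_eq_lintegral_ofReal hint ?nn]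
  case nn =>
    rw [Filter.EventuallyLE, ae_restrict_iff' measurableSet_Ioo]
    filter_upwards with x hx
    have hx0 : 0 < x := lt_of_le_of_lt ht0 hx.1
    show (0:ℝ) ≤ c * x ^ (a - 1)
    positivity
  apply ENNReal.ofReal_le_ofReal
  have hval : (∫ x in Set.Ioo t 1, c * x ^ (a - 1)) = c * ((1 - t ^ a) / a) := by
    rw [← integral_Ioc_eq_integral_Ioo, ← intervalIntegral.integral_of_le ht1,
      intervalIntegral.integral_const_mul, integral_rpow (Or.inl (by linarith))]
    have hae : a - 1 + 1 = a := by ring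
    rw [hae, Real.one_rpow]
  rw [hval]
  calc c * ((1 - t ^ a) / a) = (c / a) * (1 - t ^ a) := by ring
    _ ≤ K * (1 - t ^ a) := by
        apply mul_le_mul_of_nonneg_right hca
        linarith [hta]
end

section
/- Let P and Q be probability measures supported on (−1,1], and let 𝒫_l be the natural partition of (−1,1] into 2^l half-open intervals of equal length 2^{1−l}. Then for every integer L ≥ 1 and every p ≥ 1, W_p^p(P, Q) ≤ κ_p ( Σ_{l=1}^L 2^{−lp} Σ_{F ∈ 𝒫_l} |P(F) − Q(F)| + 2^{−Lp} ), where κ_p is a constant depending only on p. -/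
open MeasureTheory ENNReal

/-- `WpPow p P Q`: the `p`-th power of the order-`p` Wasserstein distance,
as the infimum over couplings of `∫ |x-y|^p dπ`. -/
noncomputable def WpPow (p : ℝ) (P Q : Measure ℝ) : ℝ≥0∞ :=
  ⨅ (π : Measure (ℝ × ℝ)) (_ : π.map Prod.fst = P) (_ : π.map Prod.snd = Q),
    ∫⁻ z, ENNReal.ofReal (|z.1 - z.2| ^ p) ∂π

/-- The `j`-th cell (for `j = 0, …, 2^l - 1`) of the natural partition `𝒫_l` of
`(-1,1]` into `2^l` half-open intervals of length `2^(1-l)`. -/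
noncomputable def dyadicCell (l j : ℕ) : Set ℝ :=
  Set.Ioc (-1 + j * (2 : ℝ) ^ ((1 : ℝ) - l)) (-1 + (j + 1) * (2 : ℝ) ^ ((1 : ℝ) - l))

section Aux

open Set


noncomputable def pairM (μ ν : Measure ℝ) : Measure (ℝ × ℝ) :=
  (min (μ univ) (ν univ) / (μ univ * ν univ)) • (μ.prod ν)

variable {μ ν : Measure ℝ}

lemma pair_aux {a b x : ℝ≥0∞} (ha : a ≠ ∞) (hb : b ≠ ∞) :
    min a b / (a * b) * (b * x) ≤ x := by
  rcases eq_or_ne a 0 with h0 | h0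
  · simp [h0]
  rcases eq_or_ne b 0 with h1 | h1
  · simp [h1]
  rw [div_eq_mul_inv, ENNReal.mul_inv (Or.inl h0) (Or.inl ha)]
  calc min a b * (a⁻¹ * b⁻¹) * (b * x) = (min a b * a⁻¹) * ((b⁻¹ * b) * x) := by ring
    _ ≤ (a * a⁻¹) * (1 * x) := by
        gcongr
        · exact min_le_left _ _
        · rw [ENNReal.inv_mul_cancel h1 hb]
    _ = x := by rw [ENNReal.mul_inv_cancel h0 ha, one_mul, one_mul]

lemma pair_aux2 {m a : ℝ≥0∞} (ha : a ≠ ∞) : m / a * a ≤ m := by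
  rcases eq_or_ne a 0 with h0 | h0
  · simp [h0]
  · rw [ENNReal.div_mul_cancel h0 ha]


lemma pairM_univ [IsFiniteMeasure μ] [IsFiniteMeasure ν] :
    pairM μ ν univ = min (μ univ) (ν univ) := by
  have hprod : (μ.prod ν) univ = μ univ * ν univ := by
    rw [← Set.univ_prod_univ, Measure.prod_prod]
  rw [pairM, Measure.smul_apply, smul_eq_mul, hprod]
  rcases eq_or_ne (μ univ) 0 with h0 | h0
  · simp [h0]
  rcases eq_or_ne (ν univ) 0 with h1 | h1
  · simp [h1]
  exact ENNReal.div_mul_cancel (by simp [h0, h1]) (by finiteness)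

lemma pairM_fst_le [IsFiniteMeasure μ] [IsFiniteMeasure ν] :
    (pairM μ ν).map Prod.fst ≤ μ := by
  rw [pairM, Measure.map_smul, Measure.map_fst_prod]
  intro s
  simp only [Measure.smul_apply, smul_eq_mul]
  calc min (μ univ) (ν univ) / (μ univ * ν univ) * (ν univ * μ s)
      ≤ μ s := pair_aux (by finiteness) (by finiteness)

lemma pairM_snd_le [IsFiniteMeasure μ] [IsFiniteMeasure ν] :
    (pairM μ ν).map Prod.snd ≤ ν := by
  rw [pairM, Measure.map_smul, Measure.map_snd_prod]
  intro s
  simp only [Measure.smul_apply, smul_eq_mul]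
  calc min (μ univ) (ν univ) / (μ univ * ν univ) * (μ univ * ν s)
      ≤ ν s := by
        rw [min_comm, mul_comm (μ univ) (ν univ)]
        exact pair_aux (by finiteness) (by finiteness)

lemma pairM_cost [IsFiniteMeasure μ] [IsFiniteMeasure ν] {p c d : ℝ} (hp : 0 ≤ p)
    (hcd : c ≤ d) (hμ : μ (Set.Ioc c d)ᶜ = 0) (hν : ν (Set.Ioc c d)ᶜ = 0) :
    ∫⁻ z, ENNReal.ofReal (|z.1 - z.2| ^ p) ∂(pairM μ ν)
      ≤ ENNReal.ofReal ((d - c) ^ p) * min (μ univ) (ν univ) := by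
  have hbound : ∫⁻ z, ENNReal.ofReal (|z.1 - z.2| ^ p) ∂(μ.prod ν)
      ≤ ENNReal.ofReal ((d - c) ^ p) * (μ univ * ν univ) := by
    have hnull : (μ.prod ν) ((Set.Ioc c d ×ˢ Set.Ioc c d)ᶜ) = 0 := by
      have hsub : (Set.Ioc c d ×ˢ Set.Ioc c d)ᶜ ⊆
          ((Set.Ioc c d)ᶜ ×ˢ univ) ∪ (univ ×ˢ (Set.Ioc c d)ᶜ) := by
        intro z hz
        simp only [mem_compl_iff, mem_prod, not_and] at hz
        by_cases h1 : z.1 ∈ Set.Ioc c d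
        · exact Or.inr ⟨trivial, hz h1⟩
        · exact Or.inl ⟨h1, trivial⟩
      refine le_antisymm (le_trans (measure_mono hsub) ?_) zero_le
      refine le_trans (measure_union_le _ _) ?_
      rw [Measure.prod_prod, Measure.prod_prod, hμ, hν]
      simp
    have hae : ∀ᵐ z ∂(μ.prod ν), ENNReal.ofReal (|z.1 - z.2| ^ p)
        ≤ ENNReal.ofReal ((d - c) ^ p) := by
      rw [ae_iff]
      refine measure_mono_null (fun z hz => ?_) hnull
      simp only [mem_compl_iff, mem_prod, not_and]
      intro h1 h2
      simp only [mem_setOf_eq, not_le] at hz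
      have h1' := h1; have h2' := h2
      simp only [Set.mem_Ioc] at h1' h2'
      have habs : |z.1 - z.2| ≤ d - c := by
        rw [abs_sub_le_iff]
        constructor <;> linarith [h1'.1, h1'.2, h2'.1, h2'.2]
      have : ENNReal.ofReal (|z.1 - z.2| ^ p) ≤ ENNReal.ofReal ((d - c) ^ p) :=
        ENNReal.ofReal_le_ofReal (Real.rpow_le_rpow (abs_nonneg _) habs hp)
      exact absurd this (not_le.mpr hz)
    calc ∫⁻ z, ENNReal.ofReal (|z.1 - z.2| ^ p) ∂(μ.prod ν)
        ≤ ∫⁻ _, ENNReal.ofReal ((d - c) ^ p) ∂(μ.prod ν) := lintegral_mono_ae hae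
      _ = ENNReal.ofReal ((d - c) ^ p) * (μ.prod ν) univ := lintegral_const _
      _ = ENNReal.ofReal ((d - c) ^ p) * (μ univ * ν univ) := by
          rw [← Set.univ_prod_univ, Measure.prod_prod]
  rw [pairM, lintegral_smul_measure]
  calc min (μ univ) (ν univ) / (μ univ * ν univ) * ∫⁻ z, ENNReal.ofReal (|z.1 - z.2| ^ p) ∂(μ.prod ν)
      ≤ min (μ univ) (ν univ) / (μ univ * ν univ) *
        (ENNReal.ofReal ((d - c) ^ p) * (μ univ * ν univ)) := by gcongr
    _ = ENNReal.ofReal ((d - c) ^ p) *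
        (min (μ univ) (ν univ) / (μ univ * ν univ) * (μ univ * ν univ)) := by ring
    _ ≤ ENNReal.ofReal ((d - c) ^ p) * min (μ univ) (ν univ) := by
        gcongr
        exact pair_aux2 (by finiteness)


def tile (c len : ℝ) (l j : ℕ) : Set ℝ :=
  Set.Ioc (c + j * (len / 2 ^ l)) (c + (j + 1) * (len / 2 ^ l))

noncomputable def msum (μ ν : Measure ℝ) (c len : ℝ) (l : ℕ) : ℝ≥0∞ :=
  ∑ j ∈ Finset.range (2 ^ l), min (μ (tile c len l j)) (ν (tile c len l j))

noncomputable def dsum (μ ν : Measure ℝ) (c len : ℝ) (l : ℕ) : ℝ≥0∞ :=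
  ∑ j ∈ Finset.range (2 ^ l),
    ((μ (tile c len l j) - ν (tile c len l j)) + (ν (tile c len l j) - μ (tile c len l j)))

lemma tile_zero (c len : ℝ) : tile c len 0 0 = Set.Ioc c (c + len) := by
  simp [tile]

lemma tile_left (c len : ℝ) (l j : ℕ) : tile c len (l + 1) j = tile c (len / 2) l j := by
  have h : len / 2 ^ (l + 1) = len / 2 / 2 ^ l := by ring
  simp [tile, h]

lemma tile_right (c len : ℝ) (l j : ℕ) :
    tile c len (l + 1) (2 ^ l + j) = tile (c + len / 2) (len / 2) l j := by
  have hl : ((2:ℝ) ^ l) ≠ 0 := by positivity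
  have h1 : c + (↑(2 ^ l + j) : ℝ) * (len / 2 ^ (l + 1))
      = c + len / 2 + (j : ℝ) * (len / 2 / 2 ^ l) := by
    push_cast; field_simp; ring
  have h2 : c + ((↑(2 ^ l + j) : ℝ) + 1) * (len / 2 ^ (l + 1))
      = c + len / 2 + ((j : ℝ) + 1) * (len / 2 / 2 ^ l) := by
    push_cast; field_simp; ring
  simp only [tile, h1, h2]

lemma sum_range_two_pow_succ {M : Type*} [AddCommMonoid M] (l : ℕ) (f : ℕ → M) :
    ∑ j ∈ Finset.range (2 ^ (l + 1)), f j
      = (∑ j ∈ Finset.range (2 ^ l), f j) + ∑ j ∈ Finset.range (2 ^ l), f (2 ^ l + j) := by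
  have h : 2 ^ (l + 1) = 2 ^ l + 2 ^ l := by ring
  rw [h, Finset.sum_range_add]

lemma msum_succ (μ ν : Measure ℝ) (c len : ℝ) (l : ℕ) :
    msum μ ν c len (l + 1) = msum μ ν c (len / 2) l + msum μ ν (c + len / 2) (len / 2) l := by
  rw [msum, sum_range_two_pow_succ]
  congr 1
  · exact Finset.sum_congr rfl fun j _ => by rw [tile_left]
  · exact Finset.sum_congr rfl fun j _ => by rw [tile_right]

lemma dsum_succ (μ ν : Measure ℝ) (c len : ℝ) (l : ℕ) :
    dsum μ ν c len (l + 1) = dsum μ ν c (len / 2) l + dsum μ ν (c + len / 2) (len / 2) l := by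
  rw [dsum, sum_range_two_pow_succ]
  congr 1
  · exact Finset.sum_congr rfl fun j _ => by rw [tile_left]
  · exact Finset.sum_congr rfl fun j _ => by rw [tile_right]

lemma msum_zero (μ ν : Measure ℝ) (c len : ℝ) :
    msum μ ν c len 0 = min (μ (Set.Ioc c (c + len))) (ν (Set.Ioc c (c + len))) := by
  simp [msum, tile_zero]

lemma measure_Ioc_split (μ : Measure ℝ) (c len : ℝ) (h : 0 ≤ len) :
    μ (Set.Ioc c (c + len)) = μ (Set.Ioc c (c + len / 2)) + μ (Set.Ioc (c + len / 2) (c + len)) := by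
  rw [← measure_union ((Set.Ioc_disjoint_Ioc_of_le le_rfl)) measurableSet_Ioc,
    Set.Ioc_union_Ioc_eq_Ioc (by linarith) (by linarith)]

lemma msum_one_le (μ ν : Measure ℝ) (c len : ℝ) (h : 0 ≤ len) :
    msum μ ν c len 1 ≤ msum μ ν c len 0 := by
  rw [msum_succ, msum_zero, msum_zero, msum_zero]
  have hμ := measure_Ioc_split μ c len h
  have hν := measure_Ioc_split ν c len h
  have h2 : c + len / 2 + len / 2 = c + len := by ring
  rw [h2] at *
  refine le_min ?_ ?_
  · rw [hμ]; exact add_le_add (min_le_left _ _) (min_le_left _ _)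
  · rw [hν]; exact add_le_add (min_le_right _ _) (min_le_right _ _)

lemma msum_succ_le (μ ν : Measure ℝ) (c len : ℝ) (h : 0 ≤ len) (l : ℕ) :
    msum μ ν c len (l + 1) ≤ msum μ ν c len l := by
  induction l generalizing c len with
  | zero => exact msum_one_le μ ν c len h
  | succ l ih =>
      rw [msum_succ μ ν c len (l+1), msum_succ μ ν c len l]
      exact add_le_add (ih c (len/2) (by linarith)) (ih (c + len/2) (len/2) (by linarith))

lemma msum_le_zero (μ ν : Measure ℝ) (c len : ℝ) (h : 0 ≤ len) (l : ℕ) :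
    msum μ ν c len l ≤ msum μ ν c len 0 := by
  induction l with
  | zero => exact le_rfl
  | succ l ih => exact (msum_succ_le μ ν c len h l).trans ih

lemma dsum_zero (μ ν : Measure ℝ) (c len : ℝ) :
    dsum μ ν c len 0 = (μ (Set.Ioc c (c + len)) - ν (Set.Ioc c (c + len)))
      + (ν (Set.Ioc c (c + len)) - μ (Set.Ioc c (c + len))) := by
  simp [dsum, tile_zero]

lemma min_add_dist_eq_max (a b : ℝ≥0∞) : min a b + ((a - b) + (b - a)) = max a b := by
  rcases le_total a b with hle | hle
  · rw [min_eq_left hle, max_eq_right hle, tsub_eq_zero_of_le hle, zero_add,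
      add_tsub_cancel_of_le hle]
  · rw [min_eq_right hle, max_eq_left hle, tsub_eq_zero_of_le hle, add_zero,
      add_tsub_cancel_of_le hle]

lemma msum_le_succ_add_dsum (μ ν : Measure ℝ) (c len : ℝ) (h : 0 ≤ len) (l : ℕ) :
    msum μ ν c len l ≤ msum μ ν c len (l + 1) + dsum μ ν c len (l + 1) := by
  induction l generalizing c len with
  | zero =>
      rw [msum_succ, msum_zero, dsum_succ, msum_zero, msum_zero, dsum_zero, dsum_zero]
      have h2 : c + len / 2 + len / 2 = c + len := by ring
      rw [h2]
      set A := Set.Ioc c (c + len / 2)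
      set B := Set.Ioc (c + len / 2) (c + len)
      have hμ : μ (Set.Ioc c (c + len)) = μ A + μ B :=
        measure_Ioc_split μ c len h
      calc min (μ (Set.Ioc c (c + len))) (ν (Set.Ioc c (c + len)))
          ≤ μ (Set.Ioc c (c + len)) := min_le_left _ _
        _ = μ A + μ B := hμ
        _ ≤ max (μ A) (ν A) + max (μ B) (ν B) :=
            add_le_add (le_max_left _ _) (le_max_left _ _)
        _ = (min (μ A) (ν A) + ((μ A - ν A) + (ν A - μ A)))
            + (min (μ B) (ν B) + ((μ B - ν B) + (ν B - μ B))) := by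
            rw [min_add_dist_eq_max, min_add_dist_eq_max]
        _ = _ := by ring
  | succ l ih =>
      rw [msum_succ μ ν c len l, msum_succ μ ν c len (l+1), dsum_succ μ ν c len (l+1)]
      calc msum μ ν c (len / 2) l + msum μ ν (c + len / 2) (len / 2) l
          ≤ (msum μ ν c (len / 2) (l+1) + dsum μ ν c (len / 2) (l+1))
            + (msum μ ν (c + len / 2) (len / 2) (l+1) + dsum μ ν (c + len / 2) (len / 2) (l+1)) :=
            add_le_add (ih c (len/2) (by linarith)) (ih (c + len/2) (len/2) (by linarith))
        _ = _ := by ring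

lemma min_tsub_const (a b c : ℝ≥0∞) : min (a - c) (b - c) = min a b - c := by
  rcases le_total a b with h | h
  · rw [min_eq_left h, min_eq_left (tsub_le_tsub_right h c)]
  · rw [min_eq_right h, min_eq_right (tsub_le_tsub_right h c)]

lemma tsub_add_tsub_le {a b a' b' : ℝ≥0∞} (h : b ≤ a) (h' : b' ≤ a')
    (hb : b ≠ ∞) (hb' : b' ≠ ∞) :
    (a - b) + (a' - b') ≤ (a + a') - (b + b') := by
  refine ENNReal.le_sub_of_add_le_right (by simp [hb, hb', lt_top_iff_ne_top]) (le_of_eq ?_)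
  calc (a - b) + (a' - b') + (b + b') = ((a - b) + b) + ((a' - b') + b') := by ring
    _ = a + a' := by rw [tsub_add_cancel_of_le h, tsub_add_cancel_of_le h']

lemma msum_ne_top (μ ν : Measure ℝ) [IsFiniteMeasure μ] (c len : ℝ) (l : ℕ) :
    msum μ ν c len l ≠ ∞ := by
  have hle : msum μ ν c len l ≤ ∑ j ∈ Finset.range (2 ^ l), μ (tile c len l j) :=
    Finset.sum_le_sum fun j _ => min_le_left _ _
  have htop : (∑ j ∈ Finset.range (2 ^ l), μ (tile c len l j)) ≠ ∞ :=
    ENNReal.sum_ne_top.2 fun j _ => measure_ne_top μ _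
  exact (lt_of_le_of_lt hle (lt_top_iff_ne_top.2 htop)).ne

theorem key (p : ℝ) (hp : 0 ≤ p) (n : ℕ) :
    ∀ (c len : ℝ), 0 < len → ∀ (μ ν : Measure ℝ),
    IsFiniteMeasure μ → IsFiniteMeasure ν →
    ∃ π : Measure (ℝ × ℝ),
      π.map Prod.fst ≤ μ.restrict (Set.Ioc c (c + len)) ∧
      π.map Prod.snd ≤ ν.restrict (Set.Ioc c (c + len)) ∧
      π univ = min (μ (Set.Ioc c (c + len))) (ν (Set.Ioc c (c + len))) ∧
      ∫⁻ z, ENNReal.ofReal (|z.1 - z.2| ^ p) ∂π ≤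
        (∑ l ∈ Finset.range n,
          ENNReal.ofReal ((len / 2 ^ l) ^ p) * (msum μ ν c len l - msum μ ν c len (l + 1)))
        + ENNReal.ofReal ((len / 2 ^ n) ^ p) * msum μ ν c len n := by
  induction n with
  | zero =>
      intro c len hlen μ ν hμf hνf
      haveI := hμf; haveI := hνf
      set I := Set.Ioc c (c + len) with hI
      refine ⟨pairM (μ.restrict I) (ν.restrict I), ?_, ?_, ?_, ?_⟩
      · exact pairM_fst_le
      · exact pairM_snd_le
      · rw [pairM_univ, Measure.restrict_apply_univ, Measure.restrict_apply_univ]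
      · have h1 : (μ.restrict I) Iᶜ = 0 := by
          rw [Measure.restrict_apply measurableSet_Ioc.compl]; simp [hI]
        have h2 : (ν.restrict I) Iᶜ = 0 := by
          rw [Measure.restrict_apply measurableSet_Ioc.compl]; simp [hI]
        have := pairM_cost (μ := μ.restrict I) (ν := ν.restrict I) hp
          (by linarith : c ≤ c + len) h1 h2
        simp only [Finset.range_zero, Finset.sum_empty, zero_add, pow_zero, div_one]
        rw [msum_zero]
        refine this.trans ?_
        rw [Measure.restrict_apply_univ, Measure.restrict_apply_univ]
        have : c + len - c = len := by ring
        rw [this]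
  | succ n IH =>
      intro c len hlen μ ν hμf hνf
      haveI := hμf; haveI := hνf
      have hlen2 : (0:ℝ) < len / 2 := by linarith
      have e : c + len / 2 + len / 2 = c + len := by ring
      obtain ⟨πA, hA1, hA2, hA3, hA4⟩ := IH c (len / 2) hlen2 μ ν hμf hνf
      obtain ⟨πB, hB1, hB2, hB3, hB4⟩ := IH (c + len / 2) (len / 2) hlen2 μ ν hμf hνf
      rw [e] at hB1 hB2 hB3
      set I := Set.Ioc c (c + len) with hIdef
      set A := Set.Ioc c (c + len / 2) with hAdef
      set B := Set.Ioc (c + len / 2) (c + len) with hBdef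
      have hABI : A ∪ B = I := Set.Ioc_union_Ioc_eq_Ioc (by linarith) (by linarith)
      have hdisj : Disjoint A B := (Set.Ioc_disjoint_Ioc_of_le le_rfl)
      have hrestμ : μ.restrict A + μ.restrict B = μ.restrict I := by
        rw [← Measure.restrict_union hdisj measurableSet_Ioc, hABI]
      have hrestν : ν.restrict A + ν.restrict B = ν.restrict I := by
        rw [← Measure.restrict_union hdisj measurableSet_Ioc, hABI]
      haveI : IsFiniteMeasure πA :=
        ⟨by rw [hA3]; exact lt_of_le_of_lt (min_le_left _ _) (measure_lt_top μ _)⟩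
      haveI : IsFiniteMeasure πB :=
        ⟨by rw [hB3]; exact lt_of_le_of_lt (min_le_left _ _) (measure_lt_top μ _)⟩
      set σ := πA + πB with hσdef
      have hfst : σ.map Prod.fst ≤ μ.restrict I := by
        rw [hσdef, Measure.map_add _ _ measurable_fst, ← hrestμ]
        exact add_le_add hA1 hB1
      have hsnd : σ.map Prod.snd ≤ ν.restrict I := by
        rw [hσdef, Measure.map_add _ _ measurable_snd, ← hrestν]
        exact add_le_add hA2 hB2
      haveI : IsFiniteMeasure (σ.map Prod.fst) := Measure.isFiniteMeasure_map σ Prod.fst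
      haveI : IsFiniteMeasure (σ.map Prod.snd) := Measure.isFiniteMeasure_map σ Prod.snd
      set rμ := μ.restrict I - σ.map Prod.fst with hrμdef
      set rν := ν.restrict I - σ.map Prod.snd with hrνdef
      haveI : IsFiniteMeasure rμ := isFiniteMeasure_of_le (μ.restrict I) Measure.sub_le
      haveI : IsFiniteMeasure rν := isFiniteMeasure_of_le (ν.restrict I) Measure.sub_le
      set mA := min (μ A) (ν A) with hmA
      set mB := min (μ B) (ν B) with hmB
      have hσuniv : σ univ = mA + mB := by
        rw [hσdef, Measure.add_apply, hA3, hB3]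
      have hfstuniv : (σ.map Prod.fst) univ = mA + mB := by
        rw [Measure.map_apply measurable_fst MeasurableSet.univ, Set.preimage_univ, hσuniv]
      have hsnduniv : (σ.map Prod.snd) univ = mA + mB := by
        rw [Measure.map_apply measurable_snd MeasurableSet.univ, Set.preimage_univ, hσuniv]
      have hmle_μ : mA + mB ≤ μ I := by
        rw [hIdef, measure_Ioc_split μ c len (by linarith)]
        exact add_le_add (min_le_left _ _) (min_le_left _ _)
      have hmle_ν : mA + mB ≤ ν I := by
        rw [hIdef, measure_Ioc_split ν c len (by linarith)]
        exact add_le_add (min_le_right _ _) (min_le_right _ _)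
      have hrμuniv : rμ univ = μ I - (mA + mB) := by
        rw [hrμdef, Measure.sub_apply MeasurableSet.univ hfst, Measure.restrict_apply_univ,
          hfstuniv]
      have hrνuniv : rν univ = ν I - (mA + mB) := by
        rw [hrνdef, Measure.sub_apply MeasurableSet.univ hsnd, Measure.restrict_apply_univ,
          hsnduniv]
      have hminr : min (rμ univ) (rν univ) = min (μ I) (ν I) - (mA + mB) := by
        rw [hrμuniv, hrνuniv, min_tsub_const]
      set π := σ + pairM rμ rν with hπdef
      refine ⟨π, ?_, ?_, ?_, ?_⟩
      · rw [hπdef, Measure.map_add _ _ measurable_fst]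
        calc σ.map Prod.fst + (pairM rμ rν).map Prod.fst
            ≤ σ.map Prod.fst + rμ := add_le_add le_rfl pairM_fst_le
          _ = μ.restrict I := by
              rw [hrμdef, add_comm]
              exact Measure.sub_add_cancel_of_le hfst
      · rw [hπdef, Measure.map_add _ _ measurable_snd]
        calc σ.map Prod.snd + (pairM rμ rν).map Prod.snd
            ≤ σ.map Prod.snd + rν := add_le_add le_rfl pairM_snd_le
          _ = ν.restrict I := by
              rw [hrνdef, add_comm]
              exact Measure.sub_add_cancel_of_le hsnd
      · rw [hπdef, Measure.add_apply, hσuniv, pairM_univ, hminr,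
          add_tsub_cancel_of_le (le_min hmle_μ hmle_ν)]
      · -- cost bound
        have hrμc : rμ Iᶜ = 0 := by
          refine le_antisymm (le_trans (Measure.sub_le Iᶜ) ?_) zero_le
          rw [Measure.restrict_apply measurableSet_Ioc.compl]
          simp [hIdef]
        have hrνc : rν Iᶜ = 0 := by
          refine le_antisymm (le_trans (Measure.sub_le Iᶜ) ?_) zero_le
          rw [Measure.restrict_apply measurableSet_Ioc.compl]
          simp [hIdef]
        have htop : ∫⁻ z, ENNReal.ofReal (|z.1 - z.2| ^ p) ∂(pairM rμ rν)
            ≤ ENNReal.ofReal (len ^ p) * (msum μ ν c len 0 - msum μ ν c len 1) := by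
          have := pairM_cost (μ := rμ) (ν := rν) hp (by linarith : c ≤ c + len) hrμc hrνc
          have he : c + len - c = len := by ring
          rw [he] at this
          refine this.trans ?_
          rw [hminr]
          have h0 : msum μ ν c len 0 = min (μ I) (ν I) := msum_zero μ ν c len
          have h1 : msum μ ν c len 1 = mA + mB := by
            rw [msum_succ, msum_zero, msum_zero, e]
          rw [h0, h1]
        have hcost : ∫⁻ z, ENNReal.ofReal (|z.1 - z.2| ^ p) ∂π
            = (∫⁻ z, ENNReal.ofReal (|z.1 - z.2| ^ p) ∂πA)
              + (∫⁻ z, ENNReal.ofReal (|z.1 - z.2| ^ p) ∂πB)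
              + ∫⁻ z, ENNReal.ofReal (|z.1 - z.2| ^ p) ∂(pairM rμ rν) := by
          rw [hπdef, lintegral_add_measure, hσdef, lintegral_add_measure]
        rw [hcost]
        have hw : ∀ l : ℕ, len / 2 / 2 ^ l = len / 2 ^ (l + 1) := by
          intro l
          rw [div_div, ← pow_succ']
        have hAB4 : (∫⁻ z, ENNReal.ofReal (|z.1 - z.2| ^ p) ∂πA)
              + (∫⁻ z, ENNReal.ofReal (|z.1 - z.2| ^ p) ∂πB)
            ≤ (∑ l ∈ Finset.range n, ENNReal.ofReal ((len / 2 ^ (l + 1)) ^ p) *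
                (msum μ ν c len (l + 1) - msum μ ν c len (l + 2)))
              + ENNReal.ofReal ((len / 2 ^ (n + 1)) ^ p) * msum μ ν c len (n + 1) := by
          refine le_trans (add_le_add hA4 hB4) ?_
          simp only [hw]
          rw [add_add_add_comm, ← Finset.sum_add_distrib]
          have hterm : ∀ l ∈ Finset.range n,
              ENNReal.ofReal ((len / 2 ^ (l + 1)) ^ p) *
                  (msum μ ν c (len / 2) l - msum μ ν c (len / 2) (l + 1))
                + ENNReal.ofReal ((len / 2 ^ (l + 1)) ^ p) *
                  (msum μ ν (c + len / 2) (len / 2) l - msum μ ν (c + len / 2) (len / 2) (l + 1))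
              ≤ ENNReal.ofReal ((len / 2 ^ (l + 1)) ^ p) *
                  (msum μ ν c len (l + 1) - msum μ ν c len (l + 2)) := by
            intro l _
            rw [← mul_add]
            refine mul_le_mul_right ?_ _
            rw [msum_succ μ ν c len l, msum_succ μ ν c len (l + 1)]
            exact tsub_add_tsub_le (msum_succ_le μ ν c (len / 2) (by linarith) l)
              (msum_succ_le μ ν (c + len / 2) (len / 2) (by linarith) l)
              (msum_ne_top μ ν _ _ _) (msum_ne_top μ ν _ _ _)
          refine add_le_add (Finset.sum_le_sum hterm) ?_
          rw [msum_succ μ ν c len n, mul_add]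
        calc (∫⁻ z, ENNReal.ofReal (|z.1 - z.2| ^ p) ∂πA)
              + (∫⁻ z, ENNReal.ofReal (|z.1 - z.2| ^ p) ∂πB)
              + ∫⁻ z, ENNReal.ofReal (|z.1 - z.2| ^ p) ∂(pairM rμ rν)
            ≤ ((∑ l ∈ Finset.range n, ENNReal.ofReal ((len / 2 ^ (l + 1)) ^ p) *
                (msum μ ν c len (l + 1) - msum μ ν c len (l + 2)))
              + ENNReal.ofReal ((len / 2 ^ (n + 1)) ^ p) * msum μ ν c len (n + 1))
              + ENNReal.ofReal (len ^ p) * (msum μ ν c len 0 - msum μ ν c len 1) :=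
              add_le_add hAB4 htop
          _ = (∑ l ∈ Finset.range (n + 1), ENNReal.ofReal ((len / 2 ^ l) ^ p) *
                (msum μ ν c len l - msum μ ν c len (l + 1)))
              + ENNReal.ofReal ((len / 2 ^ (n + 1)) ^ p) * msum μ ν c len (n + 1) := by
              rw [Finset.sum_range_succ'
                (fun l => ENNReal.ofReal ((len / 2 ^ l) ^ p) *
                  (msum μ ν c len l - msum μ ν c len (l + 1))) n]
              simp only [pow_zero, div_one]
              ring
          _ ≤ _ := le_rfl

-- helper lemmas for Part 3
lemma measure_eq_of_le_of_univ {α β : Measure ℝ} [IsFiniteMeasure β] (h : α ≤ β)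
    (hu : β univ ≤ α univ) : α = β := by
  ext s hs
  refine le_antisymm (h s) ?_
  have h1 : β s + β sᶜ = β univ := measure_add_measure_compl hs
  have h2 : α s + α sᶜ = α univ := measure_add_measure_compl hs
  have h3 : β s = β univ - β sᶜ := ENNReal.eq_sub_of_add_eq (measure_ne_top β _) h1
  have h4 : α s = α univ - α sᶜ := ENNReal.eq_sub_of_add_eq
    (ne_top_of_le_ne_top (measure_ne_top β _) (h sᶜ)) h2
  rw [h3, h4]
  exact tsub_le_tsub hu (h sᶜ)

lemma ennreal_dist_eq {a b : ℝ≥0∞} (ha : a ≠ ∞) (hb : b ≠ ∞) :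
    (a - b) + (b - a) = ENNReal.ofReal |a.toReal - b.toReal| := by
  rcases le_total a b with h | h
  · rw [tsub_eq_zero_of_le h, zero_add,
      abs_of_nonpos (by simp [sub_nonpos, ENNReal.toReal_le_toReal ha hb, h]), neg_sub,
      ← ENNReal.toReal_sub_of_le h hb, ENNReal.ofReal_toReal
        ((tsub_le_self.trans_lt (lt_top_iff_ne_top.2 hb)).ne)]
  · rw [tsub_eq_zero_of_le h, add_zero,
      abs_of_nonneg (by simp [sub_nonneg, ENNReal.toReal_le_toReal hb ha, h]),
      ← ENNReal.toReal_sub_of_le h ha, ENNReal.ofReal_toReal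
        ((tsub_le_self.trans_lt (lt_top_iff_ne_top.2 ha)).ne)]

lemma tile_eq_dyadicCell (l j : ℕ) : tile (-1) 2 l j = dyadicCell l j := by
  have h : (2:ℝ) / 2 ^ l = (2:ℝ) ^ ((1:ℝ) - l) := by
    rw [Real.rpow_sub (by norm_num), Real.rpow_one, Real.rpow_natCast]
  rw [tile, dyadicCell, h]

lemma coeff_eq {p : ℝ} (hp : 0 ≤ p) (l : ℕ) :
    ((2:ℝ) / 2 ^ l) ^ p = (4:ℝ) ^ p * (2:ℝ) ^ (-((l:ℝ) + 1) * p) := by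
  have h1 : (2:ℝ) / 2 ^ l = 4 * (2:ℝ) ^ (-((l:ℝ) + 1)) := by
    rw [Real.rpow_neg (by norm_num), show ((l:ℝ) + 1) = ((l + 1 : ℕ) : ℝ) by push_cast; ring,
      Real.rpow_natCast]
    rw [pow_succ]
    field_simp
    ring
  rw [h1, Real.mul_rpow (by norm_num) (Real.rpow_nonneg (by norm_num) _),
    ← Real.rpow_mul (by norm_num : (0:ℝ) ≤ 2)]

end Aux

section Aux2
open Set

/-- If `P, Q` are probability measures supported on `(-1,1]`, then for every
`L ≥ 1` and `p ≥ 1`,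
`W_p^p(P,Q) ≤ κ_p (∑_{l=1}^L 2^{-lp} ∑_{F ∈ 𝒫_l} |P(F)-Q(F)| + 2^{-Lp})`
for a constant `κ_p` depending only on `p`. -/
theorem WpPow_le_dyadic_partition_bound (p : ℝ) (hp : 1 ≤ p) :
    ∃ κ : ℝ, 0 < κ ∧
      ∀ (P Q : Measure ℝ), IsProbabilityMeasure P → IsProbabilityMeasure Q →
        P (Set.Ioc (-1 : ℝ) 1) = 1 → Q (Set.Ioc (-1 : ℝ) 1) = 1 →
        ∀ L : ℕ, 1 ≤ L →
          WpPow p P Q ≤ ENNReal.ofReal (κ *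
            ((∑ l ∈ Finset.Icc 1 L, (2 : ℝ) ^ (-(l : ℝ) * p) *
                ∑ j ∈ Finset.range (2 ^ l),
                  |(P (dyadicCell l j)).toReal - (Q (dyadicCell l j)).toReal|)
              + (2 : ℝ) ^ (-(L : ℝ) * p))) := by
  have hp0 : (0:ℝ) ≤ p := le_trans zero_le_one hp
  refine ⟨(4:ℝ) ^ p, Real.rpow_pos_of_pos (by norm_num) p, ?_⟩
  intro P Q hPp hQp hP hQ L hL
  have he : (-1:ℝ) + 2 = 1 := by norm_num
  obtain ⟨π, h1, h2, h3, h4⟩ := key p hp0 L (-1) 2 (by norm_num) P Q inferInstance inferInstance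
  rw [he] at h1 h2 h3
  have h3' : π univ = 1 := by rw [h3, hP, hQ, min_self]
  -- marginals are exactly P and Q
  have hfst : π.map Prod.fst = P := by
    refine measure_eq_of_le_of_univ (le_trans h1 Measure.restrict_le_self) ?_
    rw [Measure.map_apply measurable_fst MeasurableSet.univ, Set.preimage_univ, h3',
      measure_univ]
  have hsnd : π.map Prod.snd = Q := by
    refine measure_eq_of_le_of_univ (le_trans h2 Measure.restrict_le_self) ?_
    rw [Measure.map_apply measurable_snd MeasurableSet.univ, Set.preimage_univ, h3',
      measure_univ]
  have hWp : WpPow p P Q ≤ ∫⁻ z, ENNReal.ofReal (|z.1 - z.2| ^ p) ∂π := by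
    refine le_trans (iInf_le _ π) (le_trans (iInf_le _ hfst) (iInf_le _ hsnd))
  refine hWp.trans (h4.trans ?_)
  -- notation for the real sums
  set s : ℕ → ℝ := fun m => ∑ j ∈ Finset.range (2 ^ m),
    |(P (dyadicCell m j)).toReal - (Q (dyadicCell m j)).toReal| with hs
  have hs_nonneg : ∀ m, 0 ≤ s m := fun m =>
    Finset.sum_nonneg fun j _ => abs_nonneg _
  have hdsum : ∀ m : ℕ, dsum P Q (-1) 2 m = ENNReal.ofReal (s m) := by
    intro m
    rw [hs, ENNReal.ofReal_sum_of_nonneg (fun j _ => abs_nonneg _), dsum]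
    refine Finset.sum_congr rfl fun j _ => ?_
    rw [tile_eq_dyadicCell]
    exact ennreal_dist_eq (measure_ne_top P _) (measure_ne_top Q _)
  have hmsum_le : ∀ l : ℕ, msum P Q (-1) 2 l - msum P Q (-1) 2 (l + 1)
      ≤ ENNReal.ofReal (s (l + 1)) := by
    intro l
    rw [← hdsum]
    refine tsub_le_iff_right.2 ?_
    rw [add_comm]
    exact msum_le_succ_add_dsum P Q (-1) 2 (by norm_num) l
  have hmsum_top : msum P Q (-1) 2 L ≤ 1 := by
    refine (msum_le_zero P Q (-1) 2 (by norm_num) L).trans ?_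
    rw [msum_zero, he, hP, hQ, min_self]
  calc (∑ l ∈ Finset.range L,
          ENNReal.ofReal (((2:ℝ) / 2 ^ l) ^ p) * (msum P Q (-1) 2 l - msum P Q (-1) 2 (l + 1)))
        + ENNReal.ofReal (((2:ℝ) / 2 ^ L) ^ p) * msum P Q (-1) 2 L
      ≤ (∑ l ∈ Finset.range L,
          ENNReal.ofReal (((2:ℝ) / 2 ^ l) ^ p) * ENNReal.ofReal (s (l + 1)))
        + ENNReal.ofReal (((2:ℝ) / 2 ^ L) ^ p) * 1 := by
        exact add_le_add (Finset.sum_le_sum fun l _ => mul_le_mul_right (hmsum_le l) _)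
          (mul_le_mul_right hmsum_top _)
    _ ≤ ENNReal.ofReal (∑ l ∈ Finset.range L,
          (4:ℝ) ^ p * (2:ℝ) ^ (-(((l:ℝ)) + 1) * p) * s (l + 1))
        + ENNReal.ofReal ((4:ℝ) ^ p * (2:ℝ) ^ (-(L:ℝ) * p)) := by
        refine add_le_add ?_ ?_
        · rw [ENNReal.ofReal_sum_of_nonneg]
          · refine Finset.sum_le_sum fun l _ => ?_
            rw [← ENNReal.ofReal_mul (by positivity), coeff_eq hp0 l]
          · intro l _
            have := hs_nonneg (l + 1)
            positivity
        · rw [mul_one]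
          refine ENNReal.ofReal_le_ofReal ?_
          rw [coeff_eq hp0 L]
          refine mul_le_mul_of_nonneg_left ?_ (Real.rpow_nonneg (by norm_num) p)
          refine Real.rpow_le_rpow_of_exponent_le (by norm_num) ?_
          have : -((L:ℝ) + 1) ≤ -(L:ℝ) := by linarith
          exact mul_le_mul_of_nonneg_right this hp0
    _ ≤ _ := by
        have hsum_nonneg : (0:ℝ) ≤ ∑ l ∈ Finset.range L,
            (4:ℝ) ^ p * (2:ℝ) ^ (-(((l:ℝ)) + 1) * p) * s (l + 1) := by
          refine Finset.sum_nonneg fun l _ => ?_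
          have := hs_nonneg (l + 1)
          positivity
        rw [← ENNReal.ofReal_add hsum_nonneg (by positivity)]
        refine ENNReal.ofReal_le_ofReal (le_of_eq ?_)
        have hre : ∑ l ∈ Finset.range L, (4:ℝ) ^ p * (2:ℝ) ^ (-(((l:ℝ)) + 1) * p) * s (l + 1)
            = ∑ m ∈ Finset.Icc 1 L, (4:ℝ) ^ p * (2:ℝ) ^ (-((m:ℝ)) * p) * s m := by
          rw [show Finset.Icc 1 L = Finset.Ico 1 (L + 1) by rw [Finset.Ico_add_one_right_eq_Icc],
            Finset.sum_Ico_eq_sum_range]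
          simp only [Nat.add_sub_cancel]
          refine Finset.sum_congr rfl fun l _ => ?_
          rw [Nat.add_comm 1 l]
          congr 2
          push_cast
          ring
        rw [hre, mul_add, Finset.mul_sum]
        congr 1
        refine Finset.sum_congr rfl fun m _ => by ring

end Aux2
end
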